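/- For a prime p, the polynomial Q1(z) = sum over i from 0 to p of z^{(p-1)i} factored as: the product over all monic irreducible quadratic polynomials x^2 + a x + b over F_p of (x1^2 + a x1 x2 + b x2^2) equals Q1 = (x1^{p^2} x2 - x1 x2^{p^2})/(x1^p x2 - x1 x2^p) in F_p[x1, x2]. -/

import Mathlib

namespace Q1ProofAux

open Polynomial

variable {p : ℕ} [Fact p.Prime]

lemma XpX_monic : (X ^ p - X : (ZMod p)[X]).Monic := by
  have hp := (Fact.out : p.Prime).one_lt
  exact Polynomial.monic_X_pow_sub (lt_of_le_of_lt degree_X_le (by exact_mod_cast hp))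

lemma prodXsubC : ∏ a : ZMod p, (X - C a : (ZMod p)[X]) = X ^ p - X := by
  have hp := (Fact.out : p.Prime).one_lt
  have hr : (X ^ p - X : (ZMod p)[X]).roots = Finset.univ.val := by
    have := FiniteField.roots_X_pow_card_sub_X (ZMod p)
    rwa [ZMod.card] at this
  have hc : (X ^ p - X : (ZMod p)[X]).roots.card = (X ^ p - X : (ZMod p)[X]).natDegree := by
    rw [hr, FiniteField.X_pow_card_sub_X_natDegree_eq _ hp]
    simpa using (ZMod.card p)
  have := prod_multiset_X_sub_C_of_monic_of_roots_card_eq XpX_monic hc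
  rw [hr] at this
  rw [← this]
  rfl

lemma prod_sub {A : Type*} [CommRing A] (φ : ZMod p →+* A) (t : A) :
    ∏ a : ZMod p, (t - φ a) = t ^ p - t := by
  have h := congrArg (Polynomial.eval₂ φ t) (prodXsubC (p := p))
  simpa [Polynomial.eval₂_finset_prod] using h

lemma prod_add {A : Type*} [CommRing A] (φ : ZMod p →+* A) (t : A) :
    ∏ a : ZMod p, (t + φ a) = t ^ p - t := by
  rw [← prod_sub φ t]
  rw [← Equiv.prod_comp (Equiv.neg (ZMod p)) (fun a => t - φ a)]
  simp [sub_neg_eq_add]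

lemma prodXsubC' : ∏ a : ZMod p, (X + C a : (ZMod p)[X]) = X ^ p - X := prod_add C X

noncomputable def Qd (q : ZMod p × ZMod p) : (ZMod p)[X] := X ^ 2 + C q.1 * X + C q.2

def fm (rs : ZMod p × ZMod p) : ZMod p × ZMod p := (rs.1 + rs.2, rs.1 * rs.2)

lemma deg_lin (a b : ZMod p) : (C a * X + C b : (ZMod p)[X]).degree < 2 :=
  lt_of_le_of_lt (degree_linear_le) (by norm_num)

lemma monic_Qd (q : ZMod p × ZMod p) : (Qd q).Monic := by
  rw [Qd, add_assoc]
  exact monic_X_pow_add (deg_lin _ _)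

lemma natDegree_Qd (q : ZMod p × ZMod p) : (Qd q).natDegree = 2 := by
  have hdeg : (Qd q).degree = 2 := by
    rw [Qd, add_assoc, degree_add_eq_left_of_degree_lt (by simpa using deg_lin q.1 q.2),
      degree_X_pow]; rfl
  exact natDegree_eq_of_degree_eq_some hdeg

lemma Qd_fm (r s : ZMod p) : Qd (fm (r, s)) = (X + C r) * (X + C s) := by
  simp only [Qd, fm, map_add, map_mul]
  ring

lemma not_irred_iff (q : ZMod p × ZMod p) :
    ¬ Irreducible (Qd q) ↔ ∃ rs : ZMod p × ZMod p, fm rs = q := by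
  rw [(monic_Qd q).not_irreducible_iff_exists_add_mul_eq_coeff (natDegree_Qd q)]
  constructor
  · rintro ⟨c₁, c₂, h0, h1⟩
    refine ⟨(c₁, c₂), ?_⟩
    have hc0 : (Qd q).coeff 0 = q.2 := by simp [Qd, coeff_X_pow]
    have hc1 : (Qd q).coeff 1 = q.1 := by simp [Qd, coeff_X_pow]
    rw [hc0] at h0; rw [hc1] at h1
    simp [fm, h0.symm, h1.symm]
  · rintro ⟨⟨r, s⟩, rfl⟩
    refine ⟨r, s, ?_, ?_⟩ <;> simp [Qd, fm, coeff_X_pow]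

lemma fiber_eq (r s : ZMod p) :
    Finset.univ.filter (fun rs => fm rs = fm (r, s)) = ({(r, s), (s, r)} : Finset (ZMod p × ZMod p)) := by
  ext ⟨u, v⟩
  simp only [Finset.mem_filter, Finset.mem_univ, true_and, Finset.mem_insert,
    Finset.mem_singleton, Prod.mk.injEq, fm, Prod.ext_iff]
  constructor
  · rintro ⟨h1, h2⟩
    have key : (u - r) * (u - s) = 0 := by linear_combination u * h1 - h2
    rcases mul_eq_zero.mp key with h | h
    · left
      have hu : u = r := by linear_combination h
      exact ⟨hu, by linear_combination h1 - hu⟩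
    · right
      have hu : u = s := by linear_combination h
      exact ⟨hu, by linear_combination h1 - hu⟩
  · rintro (⟨rfl, rfl⟩ | ⟨rfl, rfl⟩) <;> constructor <;> ring

lemma prod_quad (b : ZMod p) :
    ∏ a : ZMod p, (X ^ 2 + C a * X + C b : (ZMod p)[X])
      = (X ^ (p - 1) - 1) * (X ^ (p + 1) - C b) := by
  obtain ⟨n, hn⟩ : ∃ n, p = n + 1 := ⟨p - 1, by have := (Fact.out : p.Prime).pos; omega⟩
  set R := (ZMod p)[X]
  set A := FractionRing R
  have hinj : Function.Injective (algebraMap R A) := IsFractionRing.injective R A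
  apply hinj
  haveI : CharP A p := charP_of_injective_ringHom hinj p
  set ι := algebraMap R A
  set φ : ZMod p →+* A := ι.comp Polynomial.C with hφ
  set x : A := ι X with hxdef
  have hx : x ≠ 0 := by
    simp only [hxdef, ne_eq, map_eq_zero_iff ι hinj]
    exact X_ne_zero
  have key : ∀ a : ZMod p, ι (X ^ 2 + C a * X + C b) = x * ((x + φ b * x⁻¹) + φ a) := by
    intro a
    simp only [hφ, RingHom.comp_apply, map_add, map_mul, map_pow]
    rw [mul_add, mul_add, mul_left_comm x _ x⁻¹, mul_inv_cancel₀ hx, mul_one, hxdef]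
    ring
  rw [map_prod]
  simp only [key]
  rw [Finset.prod_mul_distrib, Finset.prod_const, Finset.card_univ, ZMod.card, prod_add φ _]
  have hpow : (x + φ b * x⁻¹) ^ p = x ^ p + φ b * (x⁻¹) ^ p := by
    rw [add_pow_char, mul_pow, ← map_pow φ, ZMod.pow_card]
  rw [hpow, map_mul, map_sub, map_sub, map_pow, map_pow, map_one]
  show x ^ p * _ = (x ^ (p-1) - 1) * (x ^ (p+1) - φ b)
  subst hn
  simp only [Nat.add_sub_cancel]
  have h1 : x ^ (n + 1) * (x⁻¹) ^ (n + 1) = 1 := by rw [← mul_pow, mul_inv_cancel₀ hx, one_pow]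
  have h2 : x * x⁻¹ = 1 := mul_inv_cancel₀ hx
  linear_combination (φ b) * h1 - (φ b) * x ^ n * h2

lemma prod_all_explicit :
    ∏ q : ZMod p × ZMod p, (X ^ 2 + C q.1 * X + C q.2 : (ZMod p)[X])
      = X ^ (p + 1) * (X ^ (p - 1) - 1) ^ (p + 1) *
        ∑ i ∈ Finset.range (p + 1), X ^ ((p - 1) * i) := by
  obtain ⟨n, hn⟩ : ∃ n, p = n + 1 := ⟨p - 1, by have := (Fact.out : p.Prime).pos; omega⟩
  have hgeom : (X ^ ((p-1) * (p+1)) - 1 : (ZMod p)[X])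
      = (∑ i ∈ Finset.range (p + 1), X ^ ((p - 1) * i)) * (X ^ (p - 1) - 1) := by
    have := geom_sum_mul (X ^ (p-1) : (ZMod p)[X]) (p+1)
    simp only [← pow_mul] at this
    rw [← this]
  calc ∏ q : ZMod p × ZMod p, (X ^ 2 + C q.1 * X + C q.2 : (ZMod p)[X])
      = ∏ b : ZMod p, ∏ a : ZMod p, (X ^ 2 + C a * X + C b : (ZMod p)[X]) := by
        rw [Fintype.prod_prod_type]; exact Finset.prod_comm
    _ = ∏ b : ZMod p, ((X ^ (p - 1) - 1) * (X ^ (p + 1) - C b) : (ZMod p)[X]) := by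
        simp only [prod_quad]
    _ = (X ^ (p - 1) - 1) ^ p * ((X ^ (p+1)) ^ p - X ^ (p+1)) := by
        rw [Finset.prod_mul_distrib, Finset.prod_const, Finset.card_univ, ZMod.card,
          prod_sub Polynomial.C (X ^ (p+1))]
    _ = (X ^ (p - 1) - 1) ^ p * (X ^ (p+1) * (X ^ ((p-1)*(p+1)) - 1)) := by
        subst hn; simp only [Nat.add_sub_cancel]; ring
    _ = _ := by rw [hgeom]; ring

lemma prod_all :
    ∏ q : ZMod p × ZMod p, Qd q
      = X ^ (p + 1) * (X ^ (p - 1) - 1) ^ (p + 1) *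
        ∑ i ∈ Finset.range (p + 1), X ^ ((p - 1) * i) := by
  simp only [Qd]
  exact prod_all_explicit

noncomputable def Red (p : ℕ) [Fact p.Prime] : Finset (ZMod p × ZMod p) :=
  Finset.univ.filter (fun q => ∃ rs : ZMod p × ZMod p, fm rs = q)

lemma card_fiber (r s : ZMod p) :
    (Finset.univ.filter (fun rs => fm rs = fm (r, s))).card = if r = s then 1 else 2 := by
  rw [fiber_eq]
  by_cases h : r = s
  · subst h; simp
  · rw [if_neg h]
    rw [Finset.card_insert_of_notMem (by simp [Prod.ext_iff]; tauto), Finset.card_singleton]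

lemma prod_red : ∏ q ∈ Red p, Qd q = ((X : (ZMod p)[X]) ^ p - X) ^ (p + 1) := by
  classical
  set G : (ZMod p)[X] := X ^ p - X with hG
  set c : ZMod p × ZMod p → ℕ := fun q => (Finset.univ.filter (fun rs => fm rs = q)).card with hc
  have hA : ∏ rs : ZMod p × ZMod p, Qd (fm rs) = ∏ q ∈ Red p, Qd q ^ c q := by
    rw [← Finset.prod_fiberwise_of_maps_to (g := fm) (t := Red p)
      (fun x _ => by simp [Red]) (fun rs => Qd (fm rs))]
    refine Finset.prod_congr rfl fun q hq => ?_
    rw [Finset.prod_congr rfl (fun rs hrs => by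
        rw [(Finset.mem_filter.mp hrs).2]), Finset.prod_const]
  have hF : ∏ rs : ZMod p × ZMod p, Qd (fm rs) = G ^ (2 * p) := by
    rw [Fintype.prod_prod_type]
    have : ∀ r : ZMod p, ∏ s : ZMod p, Qd (fm (r, s)) = (X + C r) ^ p * G := by
      intro r
      simp only [Qd_fm]
      rw [Finset.prod_mul_distrib, Finset.prod_const, Finset.card_univ, ZMod.card, prodXsubC']
    simp only [this]
    rw [Finset.prod_mul_distrib, Finset.prod_const, Finset.card_univ, ZMod.card,
      Finset.prod_pow, prodXsubC', ← hG, two_mul, pow_add]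
  have hDiagRed : ∀ u : ZMod p, fm (u, u) ∈ Red p := fun u => by simp [Red]
  have hC : ∏ q ∈ Red p, Qd q ^ (2 - c q) = ∏ r : ZMod p, Qd (fm (r, r)) := by
    have step1 : ∏ q ∈ Red p, Qd q ^ (2 - c q)
        = ∏ q ∈ (Red p).filter (fun q => ∃ u : ZMod p, fm (u, u) = q), Qd q := by
      rw [Finset.prod_filter]
      refine Finset.prod_congr rfl fun q hq => ?_
      obtain ⟨⟨r, s⟩, hrs⟩ := (Finset.mem_filter.mp hq).2
      have hcq : c q = if r = s then 1 else 2 := by rw [hc, ← hrs]; exact card_fiber r s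
      by_cases hd : ∃ u : ZMod p, fm (u, u) = q
      · obtain ⟨u, hu⟩ := hd
        have huu : (u, u) ∈ Finset.univ.filter (fun rs => fm rs = fm (r, s)) := by
          simp [hu, hrs]
        rw [fiber_eq] at huu
        have hrseq : r = s := by
          simp only [Finset.mem_insert, Finset.mem_singleton, Prod.ext_iff] at huu
          rcases huu with ⟨h1, h2⟩ | ⟨h1, h2⟩ <;> rw [← h1, ← h2]
        rw [if_pos ⟨u, hu⟩, hcq, if_pos hrseq, pow_one]
      · have hrs' : r ≠ s := fun h => hd ⟨r, by rw [← hrs, h]⟩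
        rw [if_neg hd, hcq, if_neg hrs']
        norm_num
    have step2 : (Red p).filter (fun q => ∃ u : ZMod p, fm (u, u) = q)
        = Finset.univ.image (fun r : ZMod p => fm (r, r)) := by
      ext q
      simp only [Finset.mem_filter, Finset.mem_image, Finset.mem_univ, true_and]
      exact ⟨fun h => h.2, fun ⟨u, hu⟩ => ⟨hu ▸ hDiagRed u, ⟨u, hu⟩⟩⟩
    rw [step1, step2, Finset.prod_image]
    intro u _ v _ h
    have huv : (u, u) ∈ Finset.univ.filter (fun rs => fm rs = fm (v, v)) := by simp [h]
    rw [fiber_eq] at huv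
    simp only [Finset.mem_insert, Finset.mem_singleton, Prod.ext_iff] at huv
    tauto
  have hdiag : ∏ r : ZMod p, Qd (fm (r, r)) = G ^ 2 := by
    simp only [Qd_fm, ← sq]
    rw [Finset.prod_pow, prodXsubC']
  have hsplit : ∀ q ∈ Red p, Qd q ^ 2 = Qd q ^ c q * Qd q ^ (2 - c q) := by
    intro q hq
    obtain ⟨⟨r, s⟩, hrs⟩ := (Finset.mem_filter.mp hq).2
    have hcq : c q = if r = s then 1 else 2 := by rw [hc, ← hrs]; exact card_fiber r s
    rw [← pow_add]
    congr 1
    split_ifs at hcq <;> omega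
  have hsq : (∏ q ∈ Red p, Qd q) * (∏ q ∈ Red p, Qd q) = G ^ (p + 1) * G ^ (p + 1) := by
    calc (∏ q ∈ Red p, Qd q) * (∏ q ∈ Red p, Qd q) = ∏ q ∈ Red p, Qd q ^ 2 := by
          rw [← Finset.prod_mul_distrib]; simp [sq]
      _ = ∏ q ∈ Red p, (Qd q ^ c q * Qd q ^ (2 - c q)) := Finset.prod_congr rfl hsplit
      _ = (∏ q ∈ Red p, Qd q ^ c q) * ∏ q ∈ Red p, Qd q ^ (2 - c q) :=
          Finset.prod_mul_distrib
      _ = G ^ (2 * p) * G ^ 2 := by rw [← hA, hF, hC, hdiag]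
      _ = G ^ (p + 1) * G ^ (p + 1) := by rw [← pow_add, ← pow_add]; congr 1; omega
  have hmA : (∏ q ∈ Red p, Qd q).Monic := Polynomial.monic_prod_of_monic _ _ fun q _ => monic_Qd q
  have hmG : (G ^ (p + 1)).Monic := by
    have hp := (Fact.out : p.Prime).one_lt
    exact (Polynomial.monic_X_pow_sub (lt_of_le_of_lt degree_X_le (by exact_mod_cast hp))).pow _
  have hcases : (∏ q ∈ Red p, Qd q - G ^ (p+1)) * (∏ q ∈ Red p, Qd q + G ^ (p+1)) = 0 := by
    linear_combination hsq
  rcases mul_eq_zero.mp hcases with h | h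
  · linear_combination h
  · have heq : ∏ q ∈ Red p, Qd q = -(G ^ (p+1)) := by linear_combination h
    have h1 : (1 : ZMod p) = -1 := by
      have := hmA.leadingCoeff
      rw [heq, leadingCoeff_neg, hmG.leadingCoeff] at this
      exact this.symm
    have hone : (-1 : (ZMod p)[X]) = 1 := by
      calc (-1 : (ZMod p)[X]) = C (-1) := by simp
        _ = C 1 := by rw [← h1]
        _ = 1 := by simp
    rw [heq, ← neg_one_mul, hone, one_mul]

open Classical in
lemma univ_irred :
    ∏ q ∈ Finset.univ.filter (fun q : ZMod p × ZMod p => Irreducible (Qd q)), Qd q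
      = ∑ i ∈ Finset.range (p + 1), X ^ ((p - 1) * i) := by
  classical
  obtain ⟨n, hn⟩ : ∃ n, p = n + 1 := ⟨p - 1, by have := (Fact.out : p.Prime).pos; omega⟩
  have hsplit := Finset.prod_filter_mul_prod_filter_not Finset.univ
    (fun q : ZMod p × ZMod p => Irreducible (Qd q)) Qd
  have hredset : Finset.univ.filter (fun q : ZMod p × ZMod p => ¬ Irreducible (Qd q)) = Red p := by
    ext q
    simp [Red, not_irred_iff]
  rw [hredset, prod_red, prod_all] at hsplit
  have hfac : ((X : (ZMod p)[X]) ^ p - X) = X * (X ^ (p - 1) - 1) := by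
    subst hn
    simp only [Nat.add_sub_cancel]
    ring
  rw [hfac, mul_pow] at hsplit
  have hD : (X : (ZMod p)[X]) ^ (p + 1) * (X ^ (p - 1) - 1) ^ (p + 1) ≠ 0 := by
    apply mul_ne_zero (pow_ne_zero _ X_ne_zero) (pow_ne_zero _ ?_)
    exact (monic_X_pow_sub_C (1 : ZMod p) (by have := (Fact.out : p.Prime).one_lt; omega)).ne_zero
  apply mul_right_cancel₀ hD
  rw [hsplit]
  ring

lemma natDegree_geom :
    (∑ i ∈ Finset.range (p + 1), (X : (ZMod p)[X]) ^ ((p - 1) * i)).natDegree = (p - 1) * p := by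
  have hp := (Fact.out : p.Prime).one_lt
  rw [Finset.sum_range_succ]
  rw [natDegree_add_eq_right_of_natDegree_lt, natDegree_X_pow]
  rw [natDegree_X_pow]
  refine lt_of_le_of_lt (natDegree_sum_le_of_forall_le _ _ (n := (p-1)*(p-1)) fun i hi => ?_) ?_
  · rw [natDegree_X_pow]
    exact Nat.mul_le_mul_left _ (by have := Finset.mem_range.mp hi; omega)
  · have : 0 < p - 1 := by omega
    exact (mul_lt_mul_iff_right₀ this).mpr (by omega)

open Classical in
lemma two_mul_card :
    2 * (Finset.univ.filter (fun q : ZMod p × ZMod p => Irreducible (Qd q))).card = (p - 1) * p := by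
  have h := congrArg natDegree (univ_irred (p := p))
  rw [natDegree_prod _ _ (fun q _ => (monic_Qd q).ne_zero), natDegree_geom] at h
  rw [← h]
  rw [Finset.sum_congr rfl (fun q _ => natDegree_Qd q), Finset.sum_const, smul_eq_mul, mul_comm]

open Classical in
lemma univ_irred_explicit :
    ∏ q ∈ Finset.univ.filter
        (fun q : ZMod p × ZMod p =>
          Irreducible (Polynomial.X ^ 2 + Polynomial.C q.1 * Polynomial.X + Polynomial.C q.2)),
        (Polynomial.X ^ 2 + Polynomial.C q.1 * Polynomial.X + Polynomial.C q.2 : (ZMod p)[X])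
      = ∑ i ∈ Finset.range (p + 1), X ^ ((p - 1) * i) := by
  have h := univ_irred (p := p)
  simp only [Qd] at h
  convert h using 3
  ext q
  exact ⟨fun h' => Finset.mem_filter.mpr ⟨Finset.mem_univ _, (Finset.mem_filter.mp h').2⟩, fun h' => Finset.mem_filter.mpr ⟨Finset.mem_univ _, (Finset.mem_filter.mp h').2⟩⟩

open Classical in
lemma two_mul_card_explicit :
    2 * (Finset.univ.filter
        (fun q : ZMod p × ZMod p =>
          Irreducible (Polynomial.X ^ 2 + Polynomial.C q.1 * Polynomial.X + Polynomial.C q.2))).card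
      = (p - 1) * p := by
  have h := two_mul_card (p := p)
  simp only [Qd] at h
  convert h using 3
  ext q
  exact ⟨fun h' => Finset.mem_filter.mpr ⟨Finset.mem_univ _, (Finset.mem_filter.mp h').2⟩, fun h' => Finset.mem_filter.mpr ⟨Finset.mem_univ _, (Finset.mem_filter.mp h').2⟩⟩

end Q1ProofAux

open MvPolynomial Polynomial Classical in
theorem Q1_prod_irreducible_quadratics (p : ℕ) [Fact p.Prime] :
    ∏ q ∈ Finset.univ.filter
        (fun q : ZMod p × ZMod p =>
          Irreducible (Polynomial.X ^ 2 + Polynomial.C q.1 * Polynomial.X + Polynomial.C q.2)),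
        ((X 0 : MvPolynomial (Fin 2) (ZMod p)) ^ 2 + MvPolynomial.C q.1 * X 0 * X 1 +
          MvPolynomial.C q.2 * X 1 ^ 2) =
      ∑ i ∈ Finset.range (p + 1), X 0 ^ ((p - 1) * i) * X 1 ^ ((p - 1) * (p - i)) := by
  classical
  set A := FractionRing ((ZMod p)[X])
  have hιinj : Function.Injective (algebraMap ((ZMod p)[X]) A) :=
    IsFractionRing.injective ((ZMod p)[X]) A
  set ι : (ZMod p)[X] →+* A := algebraMap ((ZMod p)[X]) A with hι
  set x : A := ι Polynomial.X with hx
  have hx0 : x ≠ 0 := fun h => Polynomial.X_ne_zero (hιinj (by simpa [hx] using h))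
  set φ : ZMod p →+* A := ι.comp Polynomial.C with hφ
  set e1 := MvPolynomial.finSuccEquiv (ZMod p) 1 with he1
  set e2 : MvPolynomial (Fin 1) (ZMod p) ≃ₐ[ZMod p] (ZMod p)[X] :=
    (MvPolynomial.renameEquiv (ZMod p) (Equiv.equivPUnit.{1,1} (Fin 1))).trans
      (MvPolynomial.pUnitAlgEquiv (ZMod p)) with he2
  set μ : MvPolynomial (Fin 1) (ZMod p) →+* A := ι.comp e2.toAlgHom.toRingHom with hμ
  have hμinj : Function.Injective μ := by
    simp only [hμ, RingHom.coe_comp]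
    exact hιinj.comp e2.injective
  have hμX : μ (MvPolynomial.X 0) = x := by
    simp [hμ, he2, hx]
  have hμC : ∀ a, μ (MvPolynomial.C a) = φ a := by
    intro a
    simp [hμ, he2, hφ]
  set ψ2 : Polynomial (MvPolynomial (Fin 1) (ZMod p)) →+* Polynomial A :=
    Polynomial.mapRingHom μ with hψ2
  have hψ2inj : Function.Injective ψ2 := Polynomial.map_injective μ hμinj
  set ψ3 : Polynomial A →+* Polynomial A :=
    Polynomial.eval₂RingHom Polynomial.C (Polynomial.C x * Polynomial.X) with hψ3
  have hψ3c : ∀ g : Polynomial A, ψ3 g = g.comp (Polynomial.C x * Polynomial.X) := fun g => rfl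
  have hψ3inj : Function.Injective ψ3 := by
    intro g h H
    rw [hψ3c, hψ3c] at H
    have H2 := congrArg (fun t : Polynomial A => t.comp (Polynomial.C x⁻¹ * Polynomial.X)) H
    simp only [Polynomial.comp_assoc] at H2
    have hXX : (Polynomial.C x * Polynomial.X).comp (Polynomial.C x⁻¹ * Polynomial.X)
        = (Polynomial.X : Polynomial A) := by
      simp [Polynomial.mul_comp, mul_assoc, ← mul_assoc (Polynomial.C x), ← Polynomial.C_mul,
        mul_inv_cancel₀ hx0]
    rwa [hXX, Polynomial.comp_X, Polynomial.comp_X] at H2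
  set Ψ : MvPolynomial (Fin 2) (ZMod p) →+* Polynomial A :=
    ψ3.comp (ψ2.comp e1.toAlgHom.toRingHom) with hΨ
  have hΨinj : Function.Injective Ψ := by
    simp only [hΨ, RingHom.coe_comp, AlgHom.coe_toRingHom, AlgEquiv.coe_algHom]
    exact hψ3inj.comp (hψ2inj.comp e1.injective)
  have hΨapp : ∀ v, Ψ v = ψ3 (ψ2 (e1 v)) := fun v => rfl
  have hΨX0 : Ψ (MvPolynomial.X 0) = Polynomial.C x * Polynomial.X := by
    rw [hΨapp]
    have h0 : e1 (MvPolynomial.X 0) = Polynomial.X := MvPolynomial.finSuccEquiv_X_zero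
    rw [h0]
    simp [hψ2, hψ3]
  have hΨX1 : Ψ (MvPolynomial.X 1) = Polynomial.C x := by
    rw [hΨapp]
    have h1 : e1 (MvPolynomial.X 1) = Polynomial.C (MvPolynomial.X 0) := by
      have : (1 : Fin 2) = Fin.succ 0 := rfl
      rw [this]
      exact MvPolynomial.finSuccEquiv_X_succ
    rw [h1]
    simp [hψ2, hψ3, hμX]
  have hΨC : ∀ a, Ψ (MvPolynomial.C a) = Polynomial.C (φ a) := by
    intro a
    rw [hΨapp]
    have hc : e1 (MvPolynomial.C a) = Polynomial.C (MvPolynomial.C a) := by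
      simp [he1, MvPolynomial.finSuccEquiv_apply]
    rw [hc]
    simp [hψ2, hψ3, hμC]
  apply hΨinj
  rw [map_prod, map_sum]
  have hfac : ∀ q : ZMod p × ZMod p,
      Ψ ((MvPolynomial.X 0 : MvPolynomial (Fin 2) (ZMod p)) ^ 2
          + MvPolynomial.C q.1 * MvPolynomial.X 0 * MvPolynomial.X 1
          + MvPolynomial.C q.2 * MvPolynomial.X 1 ^ 2)
        = Polynomial.C x ^ 2 *
          (Polynomial.X ^ 2 + Polynomial.C (φ q.1) * Polynomial.X + Polynomial.C (φ q.2)) := by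
    intro q
    rw [map_add, map_add, map_pow, map_mul, map_mul, map_mul, map_pow, hΨX0, hΨX1, hΨC, hΨC]
    ring
  have hterm : ∀ i ∈ Finset.range (p + 1),
      Ψ ((MvPolynomial.X 0 : MvPolynomial (Fin 2) (ZMod p)) ^ ((p - 1) * i)
          * MvPolynomial.X 1 ^ ((p - 1) * (p - i)))
        = Polynomial.C x ^ ((p - 1) * p) * Polynomial.X ^ ((p - 1) * i) := by
    intro i hi
    have hip := Finset.mem_range.mp hi
    have hie : (p - 1) * i + (p - 1) * (p - i) = (p - 1) * p := by
      rw [← Nat.mul_add, Nat.add_sub_cancel' (by omega : i ≤ p)]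
    rw [map_mul, map_pow, map_pow, hΨX0, hΨX1, mul_pow, ← hie, pow_add]
    ring
  rw [Finset.prod_congr rfl (fun q _ => hfac q), Finset.sum_congr rfl hterm,
    Finset.prod_mul_distrib, Finset.prod_const, ← Finset.mul_sum]
  congr 1
  · rw [← pow_mul, ← Q1ProofAux.two_mul_card_explicit (p := p)]
  · -- ∏ (X^2 + C (φ a) X + C (φ b)) = ∑ X^((p-1) i)
    have h := congrArg (Polynomial.mapRingHom φ) (Q1ProofAux.univ_irred_explicit (p := p))
    simp only [map_prod, map_sum, Polynomial.coe_mapRingHom, Polynomial.map_add,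
      Polynomial.map_mul, Polynomial.map_pow, Polynomial.map_X, Polynomial.map_C] at h
    exact h
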